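/- arXiv:1903.08632 — 3 statements merged into one kernel-verified Lean document; each statement's English description precedes it below -/
import Mathlib

section
/- Let G be a finite abelian group of order n acting by automorphisms on a commutative algebra V over the complex numbers. Then every element x of V can be written as a finite sum x = x₁ + ... + x_k where each x_i ∈ V satisfies x_i^n ∈ V₀, the subalgebra of elements fixed by every element of G. -/
theorem stmt_0 {G V : Type*} [CommGroup G] [Fintype G] [CommRing V] [Algebra ℂ V]
    [MulSemiringAction G V] [SMulCommClass G ℂ V] (x : V) :
    ∃ (k : ℕ) (f : Fin k → V), x = ∑ i, f i ∧
      ∀ i, ∀ g : G, g • ((f i) ^ (Fintype.card G)) = (f i) ^ (Fintype.card G) := by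
  classical
  set n := Fintype.card G with hn
  set X := AddChar (Additive G) ℂ
  -- component of x along character ψ
  set F : X → V := fun ψ =>
    (n : ℂ)⁻¹ • ∑ g : G, ψ (-(Additive.ofMul g)) • (g • x) with hF
  have hnC : (n : ℂ) ≠ 0 := by
    exact_mod_cast Nat.cast_ne_zero.mpr Fintype.card_ne_zero
  -- eigenvalue property
  have heig : ∀ (ψ : X) (h : G), h • F ψ = ψ (Additive.ofMul h) • F ψ := by
    intro ψ h
    rw [hF]
    simp only
    rw [smul_comm (h : G) ((n:ℂ)⁻¹), smul_comm (ψ (Additive.ofMul h)) ((n:ℂ)⁻¹)]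
    congr 1
    rw [Finset.smul_sum, Finset.smul_sum]
    refine Fintype.sum_equiv (Equiv.mulLeft h)
      (fun g => h • (ψ (-(Additive.ofMul g)) • (g • x)))
      (fun g => ψ (Additive.ofMul h) • (ψ (-(Additive.ofMul g)) • (g • x))) ?_
    intro g
    show h • (ψ (-(Additive.ofMul g)) • (g • x))
        = ψ (Additive.ofMul h) • (ψ (-(Additive.ofMul (h * g))) • ((h * g) • x))
    rw [smul_comm (h : G), ← mul_smul, smul_smul]
    congr 1
    rw [← AddChar.map_add_eq_mul]
    congr 1
    have hmg : Additive.ofMul (h * g) = Additive.ofMul h + Additive.ofMul g := rfl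
    rw [hmg]; abel
  -- the components sum to x
  have hsum : ∑ ψ : X, F ψ = x := by
    rw [hF]
    simp only
    rw [← Finset.smul_sum, Finset.sum_comm]
    have key : ∀ g : G, ∑ ψ : X, ψ (-(Additive.ofMul g)) • (g • x)
        = (if -(Additive.ofMul g) = 0 then (Fintype.card (Additive G) : ℂ) else 0) • (g • x) := by
      intro g; rw [← Finset.sum_smul, AddChar.sum_apply_eq_ite]
    simp_rw [key]
    rw [Finset.sum_eq_single (1 : G)]
    · have h1 : -(Additive.ofMul (1 : G)) = 0 := by
        rw [show Additive.ofMul (1 : G) = 0 from rfl, neg_zero]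
      rw [h1, if_pos rfl, one_smul, smul_smul]
      have hcard : (Fintype.card (Additive G)) = n := Fintype.card_congr Additive.toMul
      rw [hcard, inv_mul_cancel₀ hnC, one_smul]
    · intro g _ hg
      rw [if_neg, zero_smul]
      simp only [neg_eq_zero]
      intro hc
      exact hg (by simpa using congrArg Additive.toMul hc)
    · intro h1; exact absurd (Finset.mem_univ 1) h1
  -- invariance of n-th powers
  have hpow : ∀ (ψ : X) (h : G), h • (F ψ) ^ n = (F ψ) ^ n := by
    intro ψ h
    have he := heig ψ h
    generalize F ψ = y at he ⊢
    rw [smul_pow', he, smul_pow, ← AddChar.map_nsmul_eq_pow]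
    have hns : n • (Additive.ofMul h) = Additive.ofMul (h ^ n) := rfl
    rw [hns, hn, pow_card_eq_one]
    simp
  -- reindex by Fin k
  refine ⟨Fintype.card X, fun i => F ((Fintype.equivFin X).symm i), ?_, ?_⟩
  · rw [Equiv.sum_comp (Fintype.equivFin X).symm F, hsum]
  · intro i g; exact hpow _ g
end

section
/- Let G be a finite solvable group acting by automorphisms on a commutative ℂ-algebra V, with n = |G|. Then every element of V lies in the smallest subset of V that contains the fixed subalgebra V₀, is closed under addition, and is closed under taking n-th roots (i.e., if x ∈ V satisfies x^n = a for some a already in the subset, then x is in the subset). -/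
private lemma char_orth {A : Type*} [CommGroup A] [Finite A] [Fintype (A →* ℂˣ)]
    [HasEnoughRootsOfUnity ℂ (Monoid.exponent A)] {a : A} (ha : a ≠ 1) :
    ∑ χ : A →* ℂˣ, ((χ a : ℂˣ) : ℂ) = 0 := by
  obtain ⟨ψ, hψ⟩ := CommGroup.exists_apply_ne_one_of_hasEnoughRootsOfUnity A ℂ ha
  refine eq_zero_of_mul_eq_self_left (b := ((ψ a : ℂˣ) : ℂ)) ?_ ?_
  · intro h
    exact hψ (Units.ext h)
  · rw [Finset.mul_sum]
    refine Fintype.sum_bijective (fun χ => ψ * χ) (Group.mulLeft_bijective ψ) _ _ fun χ => ?_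
    simp [MonoidHom.mul_apply]

theorem stmt_3 {G V : Type*} [Group G] [Fintype G] [Group.IsSolvable G] [CommRing V] [Algebra ℂ V]
    [MulSemiringAction G V] [SMulCommClass G ℂ V]
    (S : Set V)
    (hV0 : ∀ v : V, (∀ g : G, g • v = v) → v ∈ S)
    (hadd : ∀ a ∈ S, ∀ b ∈ S, a + b ∈ S)
    (hroot : ∀ a ∈ S, ∀ x : V, x ^ (Fintype.card G) = a → x ∈ S) :
    ∀ x : V, x ∈ S := by
  classical
  have hzero : (0 : V) ∈ S := hV0 0 fun g => smul_zero g
  obtain ⟨m, hm⟩ := Group.IsSolvable.solvable (G := G)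
  suffices H : ∀ j : ℕ, ∀ v : V, (∀ g : G, g ∈ derivedSeries G j → g • v = v) → v ∈ S by
    intro x
    refine H m x fun g hg => ?_
    rw [hm, Subgroup.mem_bot] at hg
    rw [hg, one_smul]
  intro j
  induction j with
  | zero =>
    intro v hv
    exact hV0 v fun g => hv g (by rw [derivedSeries_zero]; exact Subgroup.mem_top g)
  | succ j ih =>
    intro v hv
    set K : Subgroup G := derivedSeries G j with hK
    -- commutator elements of K fix v
    have hcomm : ∀ k : K, k ∈ commutator K → (k : G) • v = v := by
      intro k hk
      refine hv k ?_
      have hmap : (commutator K).map K.subtype = derivedSeries G (j + 1) := by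
        rw [derivedSeries_succ, commutator, Subgroup.map_commutator, ← hK]
        rw [← MonoidHom.range_eq_map, Subgroup.range_subtype]
      rw [← hmap]
      exact ⟨k, hk, rfl⟩
    set A := Abelianization K with hA
    have hexp : NeZero (Monoid.exponent A) :=
      ⟨(Monoid.ExponentExists.of_finite (G := A)).exponent_ne_zero⟩
    have hexpC : NeZero ((Monoid.exponent A : ℂ)) := ⟨Nat.cast_ne_zero.mpr hexp.out⟩
    have hequiv := (CommGroup.monoidHom_mulEquiv_of_hasEnoughRootsOfUnity A ℂ).some
    have hXfin : Finite (A →* ℂˣ) := Finite.of_equiv A hequiv.symm.toEquiv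
    have hXfty : Fintype (A →* ℂˣ) := Fintype.ofFinite _
    set n := Fintype.card G with hn
    set s : (A →* ℂˣ) → V := fun χ =>
      (Fintype.card K : ℂ)⁻¹ •
        ∑ k : K, (((χ (Abelianization.of k))⁻¹ : ℂˣ) : ℂ) • ((k : G) • v) with hs
    -- eigenvector property
    have key : ∀ (χ : A →* ℂˣ) (k0 : K),
        (k0 : G) • (∑ k : K, (((χ (Abelianization.of k))⁻¹ : ℂˣ) : ℂ) • ((k : G) • v))
          = ((χ (Abelianization.of k0) : ℂˣ) : ℂ) •
            ∑ k : K, (((χ (Abelianization.of k))⁻¹ : ℂˣ) : ℂ) • ((k : G) • v) := by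
      intro χ k0
      rw [Finset.smul_sum, Finset.smul_sum]
      have step1 : ∀ k : K,
          (k0 : G) • ((((χ (Abelianization.of k))⁻¹ : ℂˣ) : ℂ) • ((k : G) • v))
            = (((χ (Abelianization.of k))⁻¹ : ℂˣ) : ℂ) • (((k0 * k : K) : G) • v) := by
        intro k
        rw [smul_comm, ← mul_smul, ← Subgroup.coe_mul]
      simp only [step1]
      refine Fintype.sum_equiv (Equiv.mulLeft k0) _ _ fun k => ?_
      simp only [Equiv.coe_mulLeft]
      rw [smul_smul]
      congr 1
      rw [map_mul, map_mul, mul_inv, Units.val_mul]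
      simp [← mul_assoc]
    have heig : ∀ (χ : A →* ℂˣ) (k0 : K),
        (k0 : G) • s χ = ((χ (Abelianization.of k0) : ℂˣ) : ℂ) • s χ := by
      intro χ k0
      rw [hs]
      simp only
      rw [smul_comm, key, smul_comm]
    -- membership
    have hmem : ∀ χ : A →* ℂˣ, s χ ∈ S := by
      intro χ
      have hfix : ∀ g ∈ K, g • (s χ ^ n) = s χ ^ n := by
        intro g hg
        have h1 : ((⟨g, hg⟩ : K) : G) = g := rfl
        rw [← h1, smul_pow', heig, smul_pow]
        have h2 : ((⟨g, hg⟩ : K)) ^ n = (1 : K) := by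
          refine OneMemClass.coe_eq_one.mp ?_
          rw [SubgroupClass.coe_pow]
          exact pow_card_eq_one
        have h3 : ((χ (Abelianization.of ⟨g, hg⟩) : ℂˣ) : ℂ) ^ n = 1 := by
          rw [← Units.val_pow_eq_pow_val, ← map_pow, ← map_pow, h2, map_one, map_one,
            Units.val_one]
        rw [h3, one_smul]
      exact hroot _ (ih _ hfix) _ rfl
    -- the sum of all s χ is v
    have hsum : ∑ χ : A →* ℂˣ, s χ = v := by
      rw [hs]
      simp only
      rw [← Finset.smul_sum, Finset.sum_comm]
      have inner : ∀ k : K,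
          (∑ χ : A →* ℂˣ, (((χ (Abelianization.of k))⁻¹ : ℂˣ) : ℂ) • ((k : G) • v))
            = if Abelianization.of k = 1 then ((Fintype.card (A →* ℂˣ) : ℂ)) • v else 0 := by
        intro k
        by_cases h : Abelianization.of k = 1
        · rw [if_pos h]
          have hkv : (k : G) • v = v := hcomm k ((QuotientGroup.eq_one_iff _).mp h)
          simp only [h, map_one, inv_one, Units.val_one, one_smul, hkv]
          rw [Finset.sum_const, Finset.card_univ, ← Nat.cast_smul_eq_nsmul ℂ]
        · rw [if_neg h]
          rw [← Finset.sum_smul]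
          have : (∑ χ : A →* ℂˣ, (((χ (Abelianization.of k))⁻¹ : ℂˣ) : ℂ)) = 0 := by
            have := char_orth (A := A) (a := (Abelianization.of k)⁻¹) (by simpa using h)
            simpa [map_inv] using this
          rw [this, zero_smul]
      simp only [inner]
      rw [Finset.sum_ite, Finset.sum_const, Finset.sum_const_zero, add_zero]
      have hcard : (Finset.univ.filter fun k : K => Abelianization.of k = 1).card
          = Nat.card (commutator K) := by
        rw [← Fintype.card_subtype]
        rw [Nat.card_eq_fintype_card]
        exact Fintype.card_congr
          (Equiv.subtypeEquivRight fun k => QuotientGroup.eq_one_iff k)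
      rw [hcard, ← Nat.cast_smul_eq_nsmul ℂ, smul_smul, smul_smul]
      have hXcard : (Fintype.card (A →* ℂˣ) : ℕ) = Nat.card (K ⧸ commutator K) := by
        rw [← Nat.card_eq_fintype_card]
        exact Nat.card_congr hequiv.toEquiv
      have hlag : Nat.card (commutator K) * Nat.card (K ⧸ commutator K) = Fintype.card K := by
        rw [← Nat.card_eq_fintype_card, mul_comm]
        exact (Subgroup.card_eq_card_quotient_mul_card_subgroup (commutator K)).symm
      have hKne : (Fintype.card K : ℂ) ≠ 0 := Nat.cast_ne_zero.mpr Fintype.card_ne_zero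
      rw [hXcard, mul_assoc, ← Nat.cast_mul, hlag, inv_mul_cancel₀ hKne, one_smul]
    rw [← hsum]
    exact Finset.sum_induction s (· ∈ S) (fun a b ha hb => hadd a ha b hb) hzero
      fun χ _ => hmem χ
end

section
/- Let F be a field, let K/F be a finite Galois extension, and let M ≤ Gal(K/F) be a subgroup such that the fixed field of M equals F. If M is solvable, then K is a solvable (radical) extension of F: every element of K lies in a radical tower over F. -/
open IntermediateField Module

section GroupLemma

variable (H : Type*) [Group H]

lemma my_commutator_ne_top [Group.IsSolvable H] [Nontrivial H] : commutator H ≠ ⊤ := by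
  intro h
  have hall : ∀ m, derivedSeries H m = ⊤ := by
    intro m
    induction m with
    | zero => rfl
    | succ m ih => rw [derivedSeries_succ, ih, ← commutator_def, h]
  obtain ⟨m, hm⟩ := Group.IsSolvable.solvable (G := H)
  exact top_ne_bot ((hall m).symm.trans hm)

lemma my_exists_normal_cyclic_quotient [Finite H] [Group.IsSolvable H] [Nontrivial H] :
    ∃ (N : Subgroup H) (hN : N.Normal), N ≠ ⊤ ∧ (letI := hN; IsCyclic (H ⧸ N)) := by
  classical
  have hnt : Nontrivial (Abelianization H) := by
    rcases subsingleton_or_nontrivial (Abelianization H) with h | h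
    · exfalso
      apply my_commutator_ne_top H
      rw [eq_top_iff]
      intro x _
      exact (QuotientGroup.eq_one_iff x).mp
        (Subsingleton.elim (Abelianization.of x) 1)
    · exact h
  obtain ⟨ι, hι, n, hn, ⟨e⟩⟩ :=
    CommGroup.equiv_prod_multiplicative_zmod_of_finite (Abelianization H)
  have hιne : Nonempty ι := by
    by_contra h
    haveI : Subsingleton ((i : ι) → Multiplicative (ZMod (n i))) :=
      ⟨fun a b => funext fun i => absurd ⟨i⟩ h⟩
    exact absurd (e.toEquiv.subsingleton) (not_subsingleton (Abelianization H))
  obtain ⟨i⟩ := hιne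
  haveI : Fact (1 < n i) := ⟨hn i⟩
  haveI : NeZero (n i) := ⟨by have := hn i; omega⟩
  let φ : H →* Multiplicative (ZMod (n i)) :=
    (Pi.evalMonoidHom (fun j => Multiplicative (ZMod (n j))) i).comp
      (e.toMonoidHom.comp (Abelianization.of))
  have hφ : Function.Surjective φ := by
    intro y
    obtain ⟨a, ha⟩ := e.surjective (Pi.mulSingle i y)
    obtain ⟨x, hx⟩ := QuotientGroup.mk_surjective (s := commutator H) a
    refine ⟨x, ?_⟩
    have hx' : Abelianization.of x = a := hx
    show (e (Abelianization.of x)) i = y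
    rw [hx', ha, Pi.mulSingle_eq_same]
  refine ⟨φ.ker, MonoidHom.normal_ker φ, ?_, ?_⟩
  · intro h
    obtain ⟨x, hx⟩ := hφ (Multiplicative.ofAdd (1 : ZMod (n i)))
    have hx1 : φ x = 1 := by rw [← MonoidHom.mem_ker, h]; trivial
    have h1 : (Multiplicative.ofAdd (1 : ZMod (n i))) = 1 := by rw [← hx, hx1]
    have h10 : (1 : ZMod (n i)) = 0 := by
      simpa using congrArg Multiplicative.toAdd h1
    exact one_ne_zero h10
  · exact isCyclic_of_surjective (QuotientGroup.quotientKerEquivOfSurjective φ hφ).symm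
      (QuotientGroup.quotientKerEquivOfSurjective φ hφ).symm.surjective

end GroupLemma

section FieldStep

variable {F K : Type*} [Field F] [Field K] [Algebra F K]
  [FiniteDimensional F K] [IsGalois F K]

set_option maxHeartbeats 1000000 in
/-- Key step: any proper intermediate field can be enlarged by a radical element. -/
lemma my_radical_step
    (hroots : ∀ n : ℕ, 0 < n → n ∣ Module.finrank F K → ∃ ζ : F, IsPrimitiveRoot ζ n)
    (hsolv : Group.IsSolvable (K ≃ₐ[F] K))
    (L : IntermediateField F K) (hL : L ≠ ⊤) :
    ∃ (α : K) (n : ℕ), 0 < n ∧ α ^ n ∈ L ∧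
      L < L ⊔ IntermediateField.adjoin F {α} := by
  haveI := hsolv
  haveI : Group.IsSolvable (K ≃ₐ[↥L] K) :=
    solvable_of_surjective (f := (IntermediateField.fixingSubgroupEquiv L).toMonoidHom)
      (IntermediateField.fixingSubgroupEquiv L).surjective
  -- `K ≃ₐ[L] K` is nontrivial
  have hrk : 1 < Module.finrank ↥L K := by
    rcases lt_or_ge 1 (Module.finrank ↥L K) with h | h
    · exact h
    · exfalso
      apply hL
      have h1 : Module.finrank ↥L K = 1 :=
        le_antisymm h Module.finrank_pos
      have : Module.finrank F ↥L = Module.finrank F K := by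
        rw [← Module.finrank_mul_finrank F ↥L K, h1, mul_one]
      exact IntermediateField.eq_of_le_of_finrank_eq le_top
        (by rw [this, IntermediateField.finrank_top'])
  haveI : Nontrivial (K ≃ₐ[↥L] K) := by
    rw [← Finite.one_lt_card_iff_nontrivial, IsGalois.card_aut_eq_finrank]
    exact hrk
  obtain ⟨N, hNnormal, hNtop, hNcyc⟩ := my_exists_normal_cyclic_quotient (K ≃ₐ[↥L] K)
  haveI := hNnormal
  haveI := hNcyc
  set E := IntermediateField.fixedField N with hE
  haveI : IsGalois ↥L ↥E := IsGalois.of_fixedField_normal_subgroup N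
  haveI : FiniteDimensional ↥L ↥E := inferInstance
  haveI : IsCyclic (↥E ≃ₐ[↥L] ↥E) :=
    isCyclic_of_surjective (IsGalois.normalAutEquivQuotient N).toMonoidHom
      (IsGalois.normalAutEquivQuotient N).surjective
  set n := Module.finrank ↥L ↥E with hn
  have hEbot : E ≠ ⊥ := by
    intro h
    apply hNtop
    rw [← IntermediateField.fixingSubgroup_fixedField N, ← hE, h,
      IntermediateField.fixingSubgroup_bot]
  have hn1 : 1 < n := by
    have h0 : 0 < n := Module.finrank_pos
    rcases Nat.lt_or_ge 1 n with h | h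
    · exact h
    · exact absurd (IntermediateField.finrank_eq_one_iff.mp (by omega)) hEbot
  have hn0 : 0 < n := by omega
  have hdvd : n ∣ Module.finrank F K :=
    ⟨Module.finrank F ↥L * Module.finrank ↥E K, by
      rw [← Module.finrank_mul_finrank F ↥L K, ← Module.finrank_mul_finrank ↥L ↥E K]
      ring⟩
  obtain ⟨ζ, hζ⟩ := hroots n hn0 hdvd
  have hK : (primitiveRoots n ↥L).Nonempty :=
    ⟨algebraMap F ↥L ζ, (mem_primitiveRoots hn0).2
      (hζ.map_of_injective (algebraMap F ↥L).injective)⟩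
  obtain ⟨α', hα'pow, hα'adj⟩ := exists_root_adjoin_eq_top_of_isCyclic ↥L ↥E hK
  obtain ⟨l, hl⟩ := hα'pow
  have hcoe : ((α' : K)) ^ n = (l : K) := by
    have := congrArg (fun x : ↥E => (x : K)) hl
    simpa using this.symm
  have hαnotL : (α' : K) ∉ L := by
    intro h
    have hmem : α' ∈ Set.range (algebraMap ↥L ↥E) :=
      ⟨⟨(α' : K), h⟩, Subtype.ext rfl⟩
    have hle : (↥L)⟮α'⟯ ≤ (⊥ : IntermediateField ↥L ↥E) :=
      IntermediateField.adjoin_le_iff.2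
        (Set.singleton_subset_iff.2 (IntermediateField.mem_bot.2 hmem))
    rw [hα'adj] at hle
    have hbt : (⊥ : IntermediateField ↥L ↥E) = ⊤ := le_antisymm bot_le hle
    have : n = 1 := by
      rw [hn, ← IntermediateField.finrank_top' (F := ↥L) (E := ↥E), ← hbt,
        IntermediateField.finrank_bot]
    omega
  refine ⟨(α' : K), n, hn0, by rw [hcoe]; exact l.2, ?_⟩
  refine lt_of_le_of_ne le_sup_left ?_
  intro heq
  apply hαnotL
  have hmem2 : (α' : K) ∈ L ⊔ IntermediateField.adjoin F {(α' : K)} :=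
    SetLike.le_def.mp le_sup_right (IntermediateField.mem_adjoin_simple_self F (α' : K))
  rwa [← heq] at hmem2

/-- Radical towers from `⊥` up to `L`. -/
def MyTower (F : Type*) {K : Type*} [Field F] [Field K] [Algebra F K]
    (L : IntermediateField F K) : Prop :=
  ∃ (r : ℕ) (Fs : Fin (r + 1) → IntermediateField F K),
    Fs 0 = ⊥ ∧ Fs (Fin.last r) = L ∧
    ∀ j : Fin r, ∃ (α : K) (nj : ℕ), 0 < nj ∧ (α ^ nj) ∈ Fs j.castSucc ∧
      Fs j.succ = Fs j.castSucc ⊔ IntermediateField.adjoin F {α}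

lemma my_tower_extend {L : IntermediateField F K} (hT : MyTower F L)
    (α : K) (n : ℕ) (hn : 0 < n) (hpow : α ^ n ∈ L) :
    MyTower F (L ⊔ IntermediateField.adjoin F {α}) := by
  obtain ⟨r, Fs, h0, hlast, hstep⟩ := hT
  refine ⟨r + 1, Fin.snoc Fs (L ⊔ IntermediateField.adjoin F {α}), ?_, ?_, ?_⟩
  · rw [show (0 : Fin (r + 2)) = Fin.castSucc 0 from rfl, Fin.snoc_castSucc]
    exact h0
  · rw [Fin.snoc_last]
  · intro j
    refine Fin.lastCases ?_ ?_ j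
    · refine ⟨α, n, hn, ?_, ?_⟩
      · rw [show (Fin.last r).castSucc = Fin.castSucc (Fin.last r) from rfl,
          Fin.snoc_castSucc, hlast]
        exact hpow
      · rw [Fin.succ_last, Fin.snoc_last,
          show (Fin.last r).castSucc = Fin.castSucc (Fin.last r) from rfl,
          Fin.snoc_castSucc, hlast]
    · intro i
      obtain ⟨β, m, hm, hmem, heq⟩ := hstep i
      refine ⟨β, m, hm, ?_, ?_⟩
      · rw [show (i.castSucc).castSucc = Fin.castSucc (i.castSucc) from rfl,
          Fin.snoc_castSucc]
        exact hmem
      · rw [Fin.succ_castSucc, Fin.snoc_castSucc,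
          show (i.castSucc).castSucc = Fin.castSucc (i.castSucc) from rfl,
          Fin.snoc_castSucc]
        exact heq

end FieldStep

theorem stmt_5 {F K : Type*} [Field F] [Field K] [CharZero F] [Algebra F K]
    [FiniteDimensional F K] [IsGalois F K]
    (hroots : ∀ n : ℕ, 0 < n → n ∣ Module.finrank F K → ∃ ζ : F, IsPrimitiveRoot ζ n)
    (M : Subgroup (K ≃ₐ[F] K)) (hfix : IntermediateField.fixedField M = ⊥)
    (hM : IsSolvable M) :
    ∀ x : K, ∃ (r : ℕ) (Fs : Fin (r + 1) → IntermediateField F K),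
      Fs 0 = ⊥ ∧ x ∈ Fs (Fin.last r) ∧
      ∀ j : Fin r, ∃ (α : K) (nj : ℕ), 0 < nj ∧ (α ^ nj) ∈ Fs j.castSucc ∧
        Fs j.succ = Fs j.castSucc ⊔ IntermediateField.adjoin F {α} := by
  -- `M = ⊤`, so the full Galois group is solvable.
  have hMtop : M = ⊤ := by
    have h := IntermediateField.fixingSubgroup_fixedField M
    rw [hfix, IntermediateField.fixingSubgroup_bot] at h
    exact h.symm
  haveI : Group.IsSolvable (K ≃ₐ[F] K) := by
    haveI : Group.IsSolvable M := hM
    apply solvable_of_surjective (G := M) (f := M.subtype)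
    intro g
    exact ⟨⟨g, by rw [hMtop]; trivial⟩, rfl⟩
  -- Build a radical tower reaching `⊤` by induction on codimension.
  have key : ∀ (m : ℕ) (L : IntermediateField F K),
      Module.finrank F K ≤ Module.finrank F ↥L + m → MyTower F L →
      MyTower F (⊤ : IntermediateField F K) := by
    intro m
    induction m with
    | zero =>
      intro L hle hT
      have hLK : Module.finrank F ↥L ≤ Module.finrank F K :=
        (Subalgebra.toSubmodule L.toSubalgebra).finrank_le
      have heq : L = ⊤ := IntermediateField.eq_of_le_of_finrank_eq le_top
        (by rw [IntermediateField.finrank_top']; omega)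
      rwa [heq] at hT
    | succ m ih =>
      intro L hle hT
      by_cases hLtop : L = ⊤
      · rwa [hLtop] at hT
      · obtain ⟨α, n, hn, hpow, hlt⟩ := my_radical_step hroots inferInstance L hLtop
        apply ih (L ⊔ IntermediateField.adjoin F {α})
        · have hmod : Subalgebra.toSubmodule L.toSubalgebra <
              Subalgebra.toSubmodule (L ⊔ IntermediateField.adjoin F {α}).toSubalgebra := by
            refine lt_of_le_of_ne (fun x hx => SetLike.le_def.mp (le_of_lt hlt) hx)
              (fun h => ne_of_lt hlt (SetLike.ext' (congrArg (SetLike.coe : Submodule F K → Set K) h)))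
          have h1 : Module.finrank F ↥L <
              Module.finrank F ↥(L ⊔ IntermediateField.adjoin F {α}) :=
            Submodule.finrank_lt_finrank_of_lt hmod
          omega
        · exact my_tower_extend hT α n hn hpow
  have htop : MyTower F (⊤ : IntermediateField F K) := by
    apply key (Module.finrank F K) ⊥
    · omega
    · exact ⟨0, fun _ => ⊥, rfl, rfl, fun j => j.elim0⟩
  obtain ⟨r, Fs, h0, hlast, hstep⟩ := htop
  intro x
  exact ⟨r, Fs, h0, by rw [hlast]; trivial, hstep⟩
end
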